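/- Let β : ℤ^n → N be a homomorphism of finitely generated abelian groups. If β is naturally isomorphic to its double dual β^∨∨, then the cokernel of β is finite; conversely if Coker(β) is finite then β^∨∨ is naturally isomorphic to β. -/

import Mathlib

/-- Precomposition with `f`, as a homomorphism of dual groups. -/
def compRight {A B C : Type} [AddZeroClass A] [AddZeroClass B] [AddCommMonoid C]
    (f : A →+ B) : (B →+ C) →+ (A →+ C) where
  toFun φ := φ.comp f
  map_zero' := by ext a; rfl
  map_add' φ ψ := by ext a; rfl

/-- The Gale dual group `DG(β) = (ℤ^{n+r})⋆ / im([B Q]⋆)`. -/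
abbrev DGrp {n r m : ℕ} (B : (Fin n → ℤ) →+ (Fin m → ℤ))
    (Q : (Fin r → ℤ) →+ (Fin m → ℤ)) : Type :=
  (((Fin n → ℤ) × (Fin r → ℤ)) →+ ℤ) ⧸ (compRight (C := ℤ) (B.coprod Q)).range

/-- The dual map `β^∨ : (ℤⁿ)⋆ → DG(β)`. -/
noncomputable def dgDual {n r m : ℕ} (B : (Fin n → ℤ) →+ (Fin m → ℤ))
    (Q : (Fin r → ℤ) →+ (Fin m → ℤ)) : ((Fin n → ℤ) →+ ℤ) →+ DGrp B Q :=
  (QuotientAddGroup.mk' _).comp (compRight (AddMonoidHom.fst (Fin n → ℤ) (Fin r → ℤ)))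

/-- The canonical identification `ℤⁿ ≅ (ℤⁿ)⋆`, `x ↦ (y ↦ ∑ i, x i * y i)`. -/
def pairing (n : ℕ) : (Fin n → ℤ) →+ ((Fin n → ℤ) →+ ℤ) where
  toFun x :=
    { toFun := fun y => ∑ i, x i * y i
      map_zero' := by simp
      map_add' := by intro y z; simp [mul_add, Finset.sum_add_distrib] }
  map_zero' := by ext y; simp
  map_add' x x' := by ext y; simp [add_mul, Finset.sum_add_distrib]


lemma single_eq_smul {k : ℕ} (i : Fin k) (c : ℤ) :
    (Pi.single i c : Fin k → ℤ) = c • (Pi.single i 1 : Fin k → ℤ) := by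
  funext j
  simp [Pi.single_apply, Pi.smul_apply, smul_eq_mul, mul_ite]

/-- expansion of a hom on ℤ^k along the standard basis -/
lemma hom_expand {k : ℕ} {M : Type} [AddCommGroup M] (ξ : (Fin k → ℤ) →+ M) (x : Fin k → ℤ) :
    ξ x = ∑ i, x i • ξ (Pi.single i 1) := by
  have h1 : ξ x = ∑ i, ξ (Pi.single i (x i)) := by
    rw [← map_sum, Finset.univ_sum_single]
  rw [h1]
  refine Finset.sum_congr rfl fun i _ => ?_
  rw [single_eq_smul]
  exact ξ.toIntLinearMap.map_smul (x i) (Pi.single i 1)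

lemma pairing_apply {n : ℕ} (x y : Fin n → ℤ) : pairing n x y = ∑ i, x i * y i := rfl

lemma pairing_apply_single {n : ℕ} (x : Fin n → ℤ) (i : Fin n) :
    pairing n x (Pi.single i 1) = x i := by
  simp [pairing_apply, Pi.single_apply, mul_ite, Finset.sum_ite_eq']

lemma pairing_surjective (n : ℕ) : Function.Surjective (pairing n) := by
  intro φ
  refine ⟨fun i => φ (Pi.single i 1), ?_⟩
  refine AddMonoidHom.ext fun y => ?_
  rw [pairing_apply, hom_expand φ y]
  simp [mul_comm, smul_eq_mul]

/-- expansion of a functional on ℤ^k in terms of the dual basis given by `pairing`. -/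
lemma dual_expand {k : ℕ} (w : (Fin k → ℤ) →+ ℤ) :
    w = ∑ j, w (Pi.single j 1) • pairing k (Pi.single j 1) := by
  refine AddMonoidHom.ext fun y => ?_
  rw [hom_expand w y]
  have h2 : ∀ (j : Fin k), ((w (Pi.single j 1)) • pairing k (Pi.single j 1)) y
       = w (Pi.single j 1) * y j := by
    intro j
    have h3 : (pairing k (Pi.single j 1)) y = y j := by
      simp [pairing_apply, Pi.single_apply, ite_mul, Finset.sum_ite_eq]
    show w (Pi.single j 1) • (pairing k (Pi.single j 1)) y = _
    rw [h3, smul_eq_mul]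
  rw [AddMonoidHom.finset_sum_apply]
  simp only [h2, smul_eq_mul, mul_comm]

section ProdDual

variable {a b : ℕ}

/-- first coordinate functionals on a product -/
def coordFst (i : Fin a) : ((Fin a → ℤ) × (Fin b → ℤ)) →+ ℤ :=
  (Pi.evalAddMonoidHom (fun _ : Fin a => ℤ) i).comp (AddMonoidHom.fst _ _)

/-- second coordinate functionals on a product -/
def coordSnd (j : Fin b) : ((Fin a → ℤ) × (Fin b → ℤ)) →+ ℤ :=
  (Pi.evalAddMonoidHom (fun _ : Fin b => ℤ) j).comp (AddMonoidHom.snd _ _)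

lemma coordFst_apply (i : Fin a) (p : (Fin a → ℤ) × (Fin b → ℤ)) :
    coordFst i p = p.1 i := rfl

lemma coordSnd_apply (j : Fin b) (p : (Fin a → ℤ) × (Fin b → ℤ)) :
    coordSnd j p = p.2 j := rfl

lemma prod_hom_split {C : Type} [AddCommGroup C]
    {A B : Type} [AddCommGroup A] [AddCommGroup B]
    (ψ : (A × B) →+ C) (x : A) (y : B) : ψ (x, y) = ψ (x, 0) + ψ (0, y) := by
  rw [← map_add]
  norm_num

/-- expansion of a functional on `ℤ^a × ℤ^b` in the coordinate functionals -/
lemma dual_expand_prod (ψ : ((Fin a → ℤ) × (Fin b → ℤ)) →+ ℤ) :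
    ψ = ∑ i, ψ (Pi.single i 1, 0) • coordFst i + ∑ j, ψ (0, Pi.single j 1) • coordSnd j := by
  refine AddMonoidHom.ext fun p => ?_
  obtain ⟨x, y⟩ := p
  rw [AddMonoidHom.add_apply, AddMonoidHom.finset_sum_apply, AddMonoidHom.finset_sum_apply]
  have h1 : ψ (x, 0) = ∑ i, x i • ψ (Pi.single i 1, 0) := by
    have := hom_expand (ψ.comp (AddMonoidHom.inl (Fin a → ℤ) (Fin b → ℤ))) x
    simpa using this
  have h2 : ψ (0, y) = ∑ j, y j • ψ (0, Pi.single j 1) := by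
    have := hom_expand (ψ.comp (AddMonoidHom.inr (Fin a → ℤ) (Fin b → ℤ))) y
    simpa using this
  rw [prod_hom_split ψ x y, h1, h2]
  congr 1
  · refine Finset.sum_congr rfl fun i _ => ?_
    show x i • ψ (Pi.single i 1, 0) = ψ (Pi.single i 1, 0) • coordFst i (x, y)
    rw [coordFst_apply, smul_eq_mul, smul_eq_mul, mul_comm]
  · refine Finset.sum_congr rfl fun j _ => ?_
    show y j • ψ (0, Pi.single j 1) = ψ (0, Pi.single j 1) • coordSnd j (x, y)
    rw [coordSnd_apply, smul_eq_mul, smul_eq_mul, mul_comm]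

end ProdDual

section Lifts

/-- pull a map back through an injection onto its image -/
noncomputable def pull {R M X : Type} [AddCommGroup R] [AddCommGroup M] [AddCommGroup X]
    (Q : R →+ M) (hQ : Function.Injective ⇑Q) (u : X →+ M) (hu : ∀ x, u x ∈ Q.range) :
    X →+ R :=
  ((AddMonoidHom.ofInjective hQ).symm.toAddMonoidHom).comp (u.codRestrict Q.range hu)

lemma pull_spec {R M X : Type} [AddCommGroup R] [AddCommGroup M] [AddCommGroup X]
    (Q : R →+ M) (hQ : Function.Injective ⇑Q) (u : X →+ M) (hu : ∀ x, u x ∈ Q.range) (x : X) :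
    Q (pull Q hQ u hu x) = u x := by
  show Q ((AddMonoidHom.ofInjective hQ).symm ⟨u x, hu x⟩) = u x
  exact AddMonoidHom.apply_ofInjective_symm hQ ⟨u x, hu x⟩

/-- lift a map from a free group through a surjection -/
noncomputable def liftFree {k : ℕ} {X Y : Type} [AddCommGroup X] [AddCommGroup Y]
    (p : X →+ Y) (hp : Function.Surjective ⇑p) (u : (Fin k → ℤ) →+ Y) :
    {f : (Fin k → ℤ) →+ X // p.comp f = u} := by
  choose c hc using fun j => hp (u (Pi.single j 1))
  refine ⟨{ toFun := fun x => ∑ j, x j • c j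
            map_zero' := by simp
            map_add' := by
              intro x y
              simp [Pi.add_apply, add_smul, Finset.sum_add_distrib] }, ?_⟩
  refine AddMonoidHom.ext fun x => ?_
  show p (∑ j, x j • c j) = u x
  rw [map_sum, hom_expand u x]
  refine Finset.sum_congr rfl fun j _ => ?_
  rw [map_zsmul, hc]

/-- lift a map from the dual of `ℤ^a × ℤ^b` through a surjection -/
noncomputable def liftDualProd {a b : ℕ} {X Y : Type} [AddCommGroup X] [AddCommGroup Y]
    (p : X →+ Y) (hp : Function.Surjective ⇑p)
    (u : (((Fin a → ℤ) × (Fin b → ℤ)) →+ ℤ) →+ Y) :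
    {f : (((Fin a → ℤ) × (Fin b → ℤ)) →+ ℤ) →+ X // p.comp f = u} := by
  choose c hc using fun i => hp (u (coordFst i))
  choose d hd using fun j => hp (u (coordSnd j))
  refine ⟨{ toFun := fun ξ => ∑ i, ξ (Pi.single i 1, 0) • c i + ∑ j, ξ (0, Pi.single j 1) • d j
            map_zero' := by simp
            map_add' := by
              intro ξ ψ
              simp only [AddMonoidHom.add_apply, add_smul, Finset.sum_add_distrib]
              abel }, ?_⟩
  refine AddMonoidHom.ext fun ξ => ?_
  show p (∑ i, ξ (Pi.single i 1, 0) • c i + ∑ j, ξ (0, Pi.single j 1) • d j) = u ξ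
  conv_rhs => rw [dual_expand_prod ξ]
  rw [map_add, map_sum, map_sum, map_add, map_sum, map_sum]
  congr 1
  · refine Finset.sum_congr rfl fun i _ => ?_
    rw [map_zsmul, map_zsmul, hc]
  · refine Finset.sum_congr rfl fun j _ => ?_
    rw [map_zsmul, map_zsmul, hd]

end Lifts

section Comparison

variable {n : ℕ} {G R M : Type} [AddCommGroup G] [AddCommGroup R] [AddCommGroup M]

/-- dual group of a generalized presentation -/
abbrev DGG (B : (Fin n → ℤ) →+ M) (Qc : R →+ M) : Type :=
  (((Fin n → ℤ) × R) →+ ℤ) ⧸ (compRight (C := ℤ) (B.coprod Qc)).range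

/-- the map on dual groups induced by a chain map of presentations -/
noncomputable def inducedMap {R₂ M₂ : Type} [AddCommGroup R₂] [AddCommGroup M₂]
    (B₁ : (Fin n → ℤ) →+ M) (Q₁ : R →+ M) (B₂ : (Fin n → ℤ) →+ M₂) (Q₂ : R₂ →+ M₂)
    (α : ((Fin n → ℤ) × R₂) →+ ((Fin n → ℤ) × R)) (f : M₂ →+ M)
    (hα : (B₁.coprod Q₁).comp α = f.comp (B₂.coprod Q₂)) :
    DGG B₁ Q₁ →+ DGG B₂ Q₂ :=
  QuotientAddGroup.lift _ ((QuotientAddGroup.mk' _).comp (compRight (C := ℤ) α)) (by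
    rintro ψ ⟨χ, rfl⟩
    have h1 : compRight (C := ℤ) α (compRight (C := ℤ) (B₁.coprod Q₁) χ)
        = compRight (C := ℤ) (B₂.coprod Q₂) (χ.comp f) := by
      show (χ.comp (B₁.coprod Q₁)).comp α = (χ.comp f).comp (B₂.coprod Q₂)
      rw [AddMonoidHom.comp_assoc, hα, ← AddMonoidHom.comp_assoc]
    show QuotientAddGroup.mk' _ (compRight (C := ℤ) α (compRight (C := ℤ) (B₁.coprod Q₁) χ)) = 0
    rw [h1]
    exact (QuotientAddGroup.eq_zero_iff _).mpr ⟨χ.comp f, rfl⟩)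

lemma inducedMap_mk {R₂ M₂ : Type} [AddCommGroup R₂] [AddCommGroup M₂]
    (B₁ : (Fin n → ℤ) →+ M) (Q₁ : R →+ M) (B₂ : (Fin n → ℤ) →+ M₂) (Q₂ : R₂ →+ M₂)
    (α : ((Fin n → ℤ) × R₂) →+ ((Fin n → ℤ) × R)) (f : M₂ →+ M)
    (hα : (B₁.coprod Q₁).comp α = f.comp (B₂.coprod Q₂))
    (ψ : ((Fin n → ℤ) × R) →+ ℤ) :
    inducedMap B₁ Q₁ B₂ Q₂ α f hα (QuotientAddGroup.mk ψ) = QuotientAddGroup.mk (ψ.comp α) :=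
  rfl

/-- two presentations of the same map `ℤⁿ → G` have isomorphic dual groups,
compatibly with the dual maps. -/
lemma comparison {R₂ M₂ : Type} [AddCommGroup R₂] [AddCommGroup M₂]
    (Q₁ : R →+ M) (proj₁ : M →+ G) (B₁ : (Fin n → ℤ) →+ M)
    (Q₂ : R₂ →+ M₂) (proj₂ : M₂ →+ G) (B₂ : (Fin n → ℤ) →+ M₂)
    (hQ₁ : Function.Injective ⇑Q₁) (hQ₂ : Function.Injective ⇑Q₂)
    (hex₁ : ∀ x, proj₁ x = 0 ↔ x ∈ Q₁.range) (hex₂ : ∀ x, proj₂ x = 0 ↔ x ∈ Q₂.range)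
    (hBB : proj₁.comp B₁ = proj₂.comp B₂)
    (f : M →+ M₂) (hf : proj₂.comp f = proj₁)
    (f' : M₂ →+ M) (hf' : proj₁.comp f' = proj₂) :
    ∃ e : DGG B₁ Q₁ ≃+ DGG B₂ Q₂,
      ∀ φ : (Fin n → ℤ) →+ ℤ,
        e (QuotientAddGroup.mk (φ.comp (AddMonoidHom.fst (Fin n → ℤ) R)))
          = QuotientAddGroup.mk (φ.comp (AddMonoidHom.fst (Fin n → ℤ) R₂)) := by
  have hf_pt : ∀ x, proj₂ (f x) = proj₁ x := fun x => DFunLike.congr_fun hf x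
  have hf'_pt : ∀ x, proj₁ (f' x) = proj₂ x := fun x => DFunLike.congr_fun hf' x
  have hBB_pt : ∀ x, proj₁ (B₁ x) = proj₂ (B₂ x) := fun x => DFunLike.congr_fun hBB x
  -- the homotopy data
  have memh₂ : ∀ x, (f.comp B₁ - B₂) x ∈ Q₂.range := by
    intro x
    rw [← hex₂]
    simp [hf_pt, hBB_pt]
  have memg₂ : ∀ s, (f.comp Q₁) s ∈ Q₂.range := by
    intro s
    rw [← hex₂]
    simp only [AddMonoidHom.comp_apply, hf_pt]
    rw [hex₁]
    exact ⟨s, rfl⟩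
  have memh₁ : ∀ x, (f'.comp B₂ - B₁) x ∈ Q₁.range := by
    intro x
    rw [← hex₁]
    simp [hf'_pt, hBB_pt]
  have memg₁ : ∀ s, (f'.comp Q₂) s ∈ Q₁.range := by
    intro s
    rw [← hex₁]
    simp only [AddMonoidHom.comp_apply, hf'_pt]
    rw [hex₂]
    exact ⟨s, rfl⟩
  have memk₁ : ∀ x, (f'.comp f - AddMonoidHom.id M) x ∈ Q₁.range := by
    intro x
    rw [← hex₁]
    simp [hf'_pt, hf_pt]
  have memk₂ : ∀ x, (f.comp f' - AddMonoidHom.id M₂) x ∈ Q₂.range := by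
    intro x
    rw [← hex₂]
    simp [hf'_pt, hf_pt]
  set h₂ := pull Q₂ hQ₂ _ memh₂ with hh₂
  set g₂ := pull Q₂ hQ₂ _ memg₂ with hg₂
  set h₁ := pull Q₁ hQ₁ _ memh₁ with hh₁
  set g₁ := pull Q₁ hQ₁ _ memg₁ with hg₁
  set k₁ := pull Q₁ hQ₁ _ memk₁ with hk₁
  set k₂ := pull Q₂ hQ₂ _ memk₂ with hk₂
  have h₂spec : ∀ x, Q₂ (h₂ x) = f (B₁ x) - B₂ x := fun x => pull_spec Q₂ hQ₂ _ memh₂ x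
  have g₂spec : ∀ s, Q₂ (g₂ s) = f (Q₁ s) := fun s => pull_spec Q₂ hQ₂ _ memg₂ s
  have h₁spec : ∀ x, Q₁ (h₁ x) = f' (B₂ x) - B₁ x := fun x => pull_spec Q₁ hQ₁ _ memh₁ x
  have g₁spec : ∀ s, Q₁ (g₁ s) = f' (Q₂ s) := fun s => pull_spec Q₁ hQ₁ _ memg₁ s
  have k₁spec : ∀ x, Q₁ (k₁ x) = f' (f x) - x := fun x => pull_spec Q₁ hQ₁ _ memk₁ x
  have k₂spec : ∀ x, Q₂ (k₂ x) = f (f' x) - x := fun x => pull_spec Q₂ hQ₂ _ memk₂ x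
  -- chain maps
  set α : ((Fin n → ℤ) × R) →+ ((Fin n → ℤ) × R₂) :=
    (AddMonoidHom.fst _ _).prod
      ((h₂.comp (AddMonoidHom.fst _ _)) + (g₂.comp (AddMonoidHom.snd _ _))) with hα
  set α' : ((Fin n → ℤ) × R₂) →+ ((Fin n → ℤ) × R) :=
    (AddMonoidHom.fst _ _).prod
      ((h₁.comp (AddMonoidHom.fst _ _)) + (g₁.comp (AddMonoidHom.snd _ _))) with hα'
  have α_apply : ∀ (x : Fin n → ℤ) (s : R), α (x, s) = (x, h₂ x + g₂ s) := fun x s => rfl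
  have α'_apply : ∀ (x : Fin n → ℤ) (s : R₂), α' (x, s) = (x, h₁ x + g₁ s) := fun x s => rfl
  have chain : (B₂.coprod Q₂).comp α = f.comp (B₁.coprod Q₁) := by
    refine AddMonoidHom.ext fun p => ?_
    obtain ⟨x, s⟩ := p
    show (B₂.coprod Q₂) (x, h₂ x + g₂ s) = f ((B₁.coprod Q₁) (x, s))
    rw [AddMonoidHom.coprod_apply, AddMonoidHom.coprod_apply, map_add, map_add,
      h₂spec, g₂spec]
    abel
  have chain' : (B₁.coprod Q₁).comp α' = f'.comp (B₂.coprod Q₂) := by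
    refine AddMonoidHom.ext fun p => ?_
    obtain ⟨x, s⟩ := p
    show (B₁.coprod Q₁) (x, h₁ x + g₁ s) = f' ((B₂.coprod Q₂) (x, s))
    rw [AddMonoidHom.coprod_apply, AddMonoidHom.coprod_apply, map_add, map_add,
      h₁spec, g₁spec]
    abel
  -- induced maps on the dual groups
  set E₁₂ := inducedMap B₁ Q₁ B₂ Q₂ α' f' chain'
  set E₂₁ := inducedMap B₂ Q₂ B₁ Q₁ α f chain
  -- both composites are the identity
  have comp₁ : ∀ q : DGG B₁ Q₁, E₂₁ (E₁₂ q) = q := by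
    intro q
    induction q using QuotientAddGroup.induction_on with
    | H ψ =>
      show QuotientAddGroup.mk ((ψ.comp α').comp α) = QuotientAddGroup.mk ψ
      rw [QuotientAddGroup.eq_iff_sub_mem]
      refine ⟨ψ.comp ((0 : M →+ (Fin n → ℤ)).prod k₁), ?_⟩
      refine AddMonoidHom.ext fun p => ?_
      obtain ⟨x, s⟩ := p
      have e1 : Q₁ (h₁ x + g₁ (h₂ x + g₂ s) - s) = Q₁ (k₁ (B₁ x + Q₁ s)) := by
        rw [map_sub, map_add, h₁spec, g₁spec, map_add, h₂spec, g₂spec, k₁spec]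
        simp only [map_sub, map_add]
        abel
      have e2 : h₁ x + g₁ (h₂ x + g₂ s) - s = k₁ (B₁ x + Q₁ s) := hQ₁ e1
      show ψ (((0 : M →+ (Fin n → ℤ)).prod k₁) ((B₁.coprod Q₁) (x, s)))
          = ψ (α' (α (x, s))) - ψ (x, s)
      have e3 : ((0 : M →+ (Fin n → ℤ)).prod k₁) ((B₁.coprod Q₁) (x, s))
          = ((0 : Fin n → ℤ), k₁ (B₁ x + Q₁ s)) := by
        simp [AddMonoidHom.prod_apply, AddMonoidHom.coprod_apply]
      rw [e3, α_apply, α'_apply, ← e2, ← map_sub]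
      congr 1
      simp [Prod.mk_sub_mk]
  have comp₂ : ∀ q : DGG B₂ Q₂, E₁₂ (E₂₁ q) = q := by
    intro q
    induction q using QuotientAddGroup.induction_on with
    | H ψ =>
      show QuotientAddGroup.mk ((ψ.comp α).comp α') = QuotientAddGroup.mk ψ
      rw [QuotientAddGroup.eq_iff_sub_mem]
      refine ⟨ψ.comp ((0 : M₂ →+ (Fin n → ℤ)).prod k₂), ?_⟩
      refine AddMonoidHom.ext fun p => ?_
      obtain ⟨x, s⟩ := p
      have e1 : Q₂ (h₂ x + g₂ (h₁ x + g₁ s) - s) = Q₂ (k₂ (B₂ x + Q₂ s)) := by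
        rw [map_sub, map_add, h₂spec, g₂spec, map_add, h₁spec, g₁spec, k₂spec]
        simp only [map_sub, map_add]
        abel
      have e2 : h₂ x + g₂ (h₁ x + g₁ s) - s = k₂ (B₂ x + Q₂ s) := hQ₂ e1
      show ψ (((0 : M₂ →+ (Fin n → ℤ)).prod k₂) ((B₂.coprod Q₂) (x, s)))
          = ψ (α (α' (x, s))) - ψ (x, s)
      have e3 : ((0 : M₂ →+ (Fin n → ℤ)).prod k₂) ((B₂.coprod Q₂) (x, s))
          = ((0 : Fin n → ℤ), k₂ (B₂ x + Q₂ s)) := by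
        simp [AddMonoidHom.prod_apply, AddMonoidHom.coprod_apply]
      rw [e3, α'_apply, α_apply, ← e2, ← map_sub]
      congr 1
      simp [Prod.mk_sub_mk]
  refine ⟨AddEquiv.mk' ⟨⇑E₁₂, ⇑E₂₁, comp₁, comp₂⟩ (map_add E₁₂), ?_⟩
  intro φ
  show QuotientAddGroup.mk ((φ.comp (AddMonoidHom.fst (Fin n → ℤ) R)).comp α')
      = QuotientAddGroup.mk (φ.comp (AddMonoidHom.fst (Fin n → ℤ) R₂))
  exact congrArg QuotientAddGroup.mk (AddMonoidHom.ext fun p => rfl)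

end Comparison

section Canonical

lemma pairing_single_apply {n : ℕ} (i : Fin n) (y : Fin n → ℤ) :
    pairing n (Pi.single i 1) y = y i := by
  simp [pairing_apply, Pi.single_apply, ite_mul, Finset.sum_ite_eq]

variable {n r m : ℕ} {N : Type} [AddCommGroup N]

/-- the evaluation interpretation map from the canonical double dual to `N` -/
def canonTheta0 (proj : (Fin m → ℤ) →+ N) (β : (Fin n → ℤ) →+ N) :
    (((Fin n → ℤ) × ((Fin m → ℤ) →+ ℤ)) →+ ℤ) →+ N where
  toFun ψ := proj (fun j => ψ (0, pairing m (Pi.single j 1)))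
      - β (fun i => ψ (Pi.single i 1, 0))
  map_zero' := by
    simp only [AddMonoidHom.zero_apply]
    rw [show (fun _ : Fin m => (0:ℤ)) = (0 : Fin m → ℤ) from rfl,
      show (fun _ : Fin n => (0:ℤ)) = (0 : Fin n → ℤ) from rfl, map_zero, map_zero, sub_zero]
  map_add' ψ χ := by
    have hz : (fun j => (ψ + χ) (0, pairing m (Pi.single j 1)))
        = (fun j => ψ (0, pairing m (Pi.single j 1)))
          + (fun j => χ (0, pairing m (Pi.single j 1))) := by
      funext j; rfl
    have hx : (fun i => (ψ + χ) (Pi.single i 1, 0))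
        = (fun i => ψ (Pi.single i 1, 0)) + (fun i => χ (Pi.single i 1, 0)) := by
      funext i; rfl
    show (proj fun j => (ψ + χ) (0, pairing m (Pi.single j 1)))
        - β (fun i => (ψ + χ) (Pi.single i 1, 0))
      = ((proj fun j => ψ (0, pairing m (Pi.single j 1))) - β fun i => ψ (Pi.single i 1, 0))
        + ((proj fun j => χ (0, pairing m (Pi.single j 1))) - β fun i => χ (Pi.single i 1, 0))
    rw [hz, hx, map_add, map_add]
    abel

lemma canonical_equiv
    (Q : (Fin r → ℤ) →+ (Fin m → ℤ)) (proj : (Fin m → ℤ) →+ N)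
    (hprojsurj : Function.Surjective ⇑proj)
    (hexact : Function.Exact ⇑Q ⇑proj)
    (B : (Fin n → ℤ) →+ (Fin m → ℤ)) (β : (Fin n → ℤ) →+ N)
    (hB : proj.comp B = β) :
    ∃ Θ : DGG ((compRight (C := ℤ) (AddMonoidHom.fst (Fin n → ℤ) (Fin r → ℤ))).comp (pairing n))
            (compRight (C := ℤ) (B.coprod Q)) ≃+ N,
      ∀ y : Fin n → ℤ,
        Θ (QuotientAddGroup.mk ((pairing n y).comp
            (AddMonoidHom.fst (Fin n → ℤ) ((Fin m → ℤ) →+ ℤ)))) = - β y := by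
  set Bc : (Fin n → ℤ) →+ (((Fin n → ℤ) × (Fin r → ℤ)) →+ ℤ) :=
    (compRight (C := ℤ) (AddMonoidHom.fst (Fin n → ℤ) (Fin r → ℤ))).comp (pairing n) with hBc
  set Qc : (((Fin m → ℤ)) →+ ℤ) →+ (((Fin n → ℤ) × (Fin r → ℤ)) →+ ℤ) :=
    compRight (C := ℤ) (B.coprod Q) with hQc
  have hBpt : ∀ x, proj (B x) = β x := fun x => DFunLike.congr_fun hB x
  -- well-definedness
  have wellDef : ∀ ψ ∈ (compRight (C := ℤ) (Bc.coprod Qc)).range,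
      canonTheta0 proj β ψ = 0 := by
    rintro ψ ⟨χ, rfl⟩
    set u : Fin n → ℤ := fun i => χ (coordFst i) with hu
    set v : Fin r → ℤ := fun a => χ (coordSnd a) with hv
    have hx : (fun i => (χ.comp (Bc.coprod Qc)) (Pi.single i 1, 0)) = u := by
      funext i
      show χ ((Bc.coprod Qc) (Pi.single i 1, 0)) = u i
      have h1 : (Bc.coprod Qc) (Pi.single i 1, (0 : (Fin m → ℤ) →+ ℤ))
          = Bc (Pi.single i 1) := by
        rw [AddMonoidHom.coprod_apply, map_zero, add_zero]
      rw [h1]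
      have h2 : Bc (Pi.single i 1) = coordFst i := by
        refine AddMonoidHom.ext fun p => ?_
        show pairing n (Pi.single i 1) p.1 = coordFst i p
        rw [pairing_single_apply, coordFst_apply]
      rw [h2]
    have hz : (fun j => (χ.comp (Bc.coprod Qc)) (0, pairing m (Pi.single j 1)))
        = B u + Q v := by
      funext j
      show χ ((Bc.coprod Qc) (0, pairing m (Pi.single j 1))) = (B u + Q v) j
      have h1 : (Bc.coprod Qc) ((0 : Fin n → ℤ), pairing m (Pi.single j 1))
          = Qc (pairing m (Pi.single j 1)) := by
        rw [AddMonoidHom.coprod_apply, map_zero, zero_add]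
      rw [h1]
      have h2 : Qc (pairing m (Pi.single j 1))
          = (pairing m (Pi.single j 1)).comp (B.coprod Q) := rfl
      rw [h2]
      rw [dual_expand_prod ((pairing m (Pi.single j 1)).comp (B.coprod Q))]
      have h3 : ∀ i : Fin n, ((pairing m (Pi.single j 1)).comp (B.coprod Q))
          (Pi.single i 1, 0) = B (Pi.single i 1) j := by
        intro i
        show pairing m (Pi.single j 1) ((B.coprod Q) (Pi.single i 1, 0)) = _
        rw [AddMonoidHom.coprod_apply, map_zero, add_zero, pairing_single_apply]
      have h4 : ∀ a : Fin r, ((pairing m (Pi.single j 1)).comp (B.coprod Q))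
          (0, Pi.single a 1) = Q (Pi.single a 1) j := by
        intro a
        show pairing m (Pi.single j 1) ((B.coprod Q) (0, Pi.single a 1)) = _
        rw [AddMonoidHom.coprod_apply, map_zero, zero_add, pairing_single_apply]
      rw [map_add, map_sum, map_sum]
      have h5 : (B u + Q v) j = B u j + Q v j := rfl
      rw [h5]
      have h6 : B u j = ∑ i, B (Pi.single i 1) j * u i := by
        rw [hom_expand B u]
        rw [Finset.sum_apply]
        refine Finset.sum_congr rfl fun i _ => ?_
        rw [Pi.smul_apply, smul_eq_mul, mul_comm]
      have h7 : Q v j = ∑ a, Q (Pi.single a 1) j * v a := by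
        rw [hom_expand Q v]
        rw [Finset.sum_apply]
        refine Finset.sum_congr rfl fun a _ => ?_
        rw [Pi.smul_apply, smul_eq_mul, mul_comm]
      rw [h6, h7]
      congr 1
      · refine Finset.sum_congr rfl fun i _ => ?_
        rw [map_zsmul, h3, smul_eq_mul, mul_comm]
      · refine Finset.sum_congr rfl fun a _ => ?_
        rw [map_zsmul, h4, smul_eq_mul, mul_comm]
    show proj (fun j => (χ.comp (Bc.coprod Qc)) (0, pairing m (Pi.single j 1)))
        - β (fun i => (χ.comp (Bc.coprod Qc)) (Pi.single i 1, 0)) = 0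
    rw [hx, hz, map_add, hBpt, hexact.apply_apply_eq_zero v]
    abel
  -- the induced map on the quotient
  set Θq := QuotientAddGroup.lift _ (canonTheta0 proj β) wellDef with hΘq
  have Θq_mk : ∀ ψ, Θq (QuotientAddGroup.mk ψ) = canonTheta0 proj β ψ := fun ψ => rfl
  -- kernel characterization
  have hker : ∀ ψ, canonTheta0 proj β ψ = 0 → ψ ∈ (compRight (C := ℤ) (Bc.coprod Qc)).range := by
    intro ψ hψ
    set x : Fin n → ℤ := fun i => ψ (Pi.single i 1, 0) with hxd
    set z : Fin m → ℤ := fun j => ψ (0, pairing m (Pi.single j 1)) with hzd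
    have h0 : proj (z - B x) = 0 := by
      rw [map_sub, hBpt]
      have : proj z - β x = 0 := hψ
      exact this
    obtain ⟨v, hvv⟩ : z - B x ∈ Set.range ⇑Q := (hexact (z - B x)).mp h0
    have hz : z = B x + Q v := by rw [hvv]; abel
    refine ⟨{ toFun := fun ξ => ∑ i, ξ (Pi.single i 1, 0) * x i + ∑ a, ξ (0, Pi.single a 1) * v a
              map_zero' := by simp
              map_add' := by
                intro ξ ζ
                simp only [AddMonoidHom.add_apply, add_mul]
                rw [Finset.sum_add_distrib, Finset.sum_add_distrib]
                abel }, ?_⟩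
    set χ : (((Fin n → ℤ) × (Fin r → ℤ)) →+ ℤ) →+ ℤ :=
      { toFun := fun ξ => ∑ i, ξ (Pi.single i 1, 0) * x i + ∑ a, ξ (0, Pi.single a 1) * v a
        map_zero' := by simp
        map_add' := by
          intro ξ ζ
          simp only [AddMonoidHom.add_apply, add_mul]
          rw [Finset.sum_add_distrib, Finset.sum_add_distrib]
          abel }
    refine AddMonoidHom.ext fun p => ?_
    obtain ⟨xx, w⟩ := p
    show χ ((Bc.coprod Qc) (xx, w)) = ψ (xx, w)
    have hsplit : (Bc.coprod Qc) (xx, w) = Bc xx + Qc w := by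
      rw [AddMonoidHom.coprod_apply]
    rw [hsplit, map_add]
    have hχB : χ (Bc xx) = ∑ i, xx i * x i := by
      show (∑ i, Bc xx (Pi.single i 1, 0) * x i + ∑ a, Bc xx (0, Pi.single a 1) * v a) = _
      have e1 : ∀ i : Fin n, Bc xx ((Pi.single i 1 : Fin n → ℤ), (0 : Fin r → ℤ)) = xx i := by
        intro i
        show pairing n xx (Pi.single i 1) = xx i
        exact pairing_apply_single xx i
      have e2 : ∀ a : Fin r, Bc xx ((0 : Fin n → ℤ), (Pi.single a 1 : Fin r → ℤ)) = 0 := by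
        intro a
        show pairing n xx 0 = 0
        exact map_zero _
      simp only [e1, e2, zero_mul, Finset.sum_const_zero, add_zero]
    have hχQ : χ (Qc w) = ∑ i, w (B (Pi.single i 1)) * x i + ∑ a, w (Q (Pi.single a 1)) * v a := by
      show (∑ i, (w.comp (B.coprod Q)) (Pi.single i 1, 0) * x i
          + ∑ a, (w.comp (B.coprod Q)) (0, Pi.single a 1) * v a) = _
      congr 1
      · refine Finset.sum_congr rfl fun i _ => ?_
        congr 1
        show w ((B.coprod Q) (Pi.single i 1, 0)) = _
        rw [AddMonoidHom.coprod_apply, map_zero, add_zero]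
      · refine Finset.sum_congr rfl fun a _ => ?_
        congr 1
        show w ((B.coprod Q) (0, Pi.single a 1)) = _
        rw [AddMonoidHom.coprod_apply, map_zero, zero_add]
    rw [hχB, hχQ]
    -- now expand the right hand side
    have hψ1 : ψ (xx, w) = ψ (xx, 0) + ψ (0, w) := prod_hom_split ψ xx w
    have hψ2 : ψ (xx, 0) = ∑ i, xx i * x i := by
      have := hom_expand (ψ.comp (AddMonoidHom.inl (Fin n → ℤ) ((Fin m → ℤ) →+ ℤ))) xx
      simp only [AddMonoidHom.comp_apply, AddMonoidHom.inl_apply] at this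
      rw [this]
      refine Finset.sum_congr rfl fun i _ => ?_
      rw [smul_eq_mul]
    have hψ3 : ψ (0, w) = ∑ j, w (Pi.single j 1) * z j := by
      have hw := dual_expand w
      calc ψ (0, w) = (ψ.comp (AddMonoidHom.inr (Fin n → ℤ) ((Fin m → ℤ) →+ ℤ))) w := rfl
        _ = ∑ j, w (Pi.single j 1) * z j := by
            conv_lhs => rw [hw]
            rw [map_sum]
            refine Finset.sum_congr rfl fun j _ => ?_
            rw [map_zsmul, smul_eq_mul]
            rfl
    rw [hψ1, hψ2, hψ3]
    congr 1
    -- remaining: the second sums agree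
    have hwB : ∑ i, w (B (Pi.single i 1)) * x i = w (B x) := by
      rw [hom_expand B x, map_sum]
      refine Finset.sum_congr rfl fun i _ => ?_
      rw [map_zsmul, smul_eq_mul, mul_comm]
    have hwQ : ∑ a, w (Q (Pi.single a 1)) * v a = w (Q v) := by
      rw [hom_expand Q v, map_sum]
      refine Finset.sum_congr rfl fun a _ => ?_
      rw [map_zsmul, smul_eq_mul, mul_comm]
    have hwz : ∑ j, w (Pi.single j 1) * z j = w z := by
      rw [hom_expand w z]
      refine Finset.sum_congr rfl fun j _ => ?_
      rw [smul_eq_mul, mul_comm]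
    rw [hwB, hwQ, hwz, hz, map_add]
  -- bijectivity
  have hinj : Function.Injective ⇑Θq := by
    intro q₁ q₂ hq
    induction q₁ using QuotientAddGroup.induction_on with
    | H ψ₁ =>
      induction q₂ using QuotientAddGroup.induction_on with
      | H ψ₂ =>
        rw [QuotientAddGroup.eq_iff_sub_mem]
        refine hker _ ?_
        rw [map_sub]
        rw [Θq_mk, Θq_mk] at hq
        rw [hq, sub_self]
  have hsurj : Function.Surjective ⇑Θq := by
    intro ν
    obtain ⟨z, hzz⟩ := hprojsurj ν
    set ψ : ((Fin n → ℤ) × ((Fin m → ℤ) →+ ℤ)) →+ ℤ :=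
      { toFun := fun p => p.2 z
        map_zero' := rfl
        map_add' := fun p q => rfl }
    refine ⟨QuotientAddGroup.mk ψ, ?_⟩
    rw [Θq_mk]
    show proj (fun j => pairing m (Pi.single j 1) z) - β (fun i => (0 : (Fin m → ℤ) →+ ℤ) z) = ν
    have e1 : (fun j => pairing m (Pi.single j 1) z) = z := by
      funext j
      rw [pairing_single_apply]
    have e2 : (fun i : Fin n => (0 : (Fin m → ℤ) →+ ℤ) z) = 0 := by
      funext i
      rfl
    rw [e1, e2, map_zero, hzz, sub_zero]
  refine ⟨AddEquiv.ofBijective Θq ⟨hinj, hsurj⟩, ?_⟩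
  intro y
  show Θq (QuotientAddGroup.mk ((pairing n y).comp
      (AddMonoidHom.fst (Fin n → ℤ) ((Fin m → ℤ) →+ ℤ)))) = - β y
  rw [Θq_mk]
  show proj (fun j => pairing n y ((0, pairing m (Pi.single j 1)) :
        (Fin n → ℤ) × ((Fin m → ℤ) →+ ℤ)).1)
      - β (fun i => pairing n y (((Pi.single i 1 : Fin n → ℤ), (0 : (Fin m → ℤ) →+ ℤ)) :
        (Fin n → ℤ) × ((Fin m → ℤ) →+ ℤ)).1) = - β y
  have e1 : (fun j : Fin m => pairing n y (0 : Fin n → ℤ)) = 0 := by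
    funext j
    simp
  have e2 : (fun i => pairing n y (Pi.single i 1)) = y := by
    funext i
    rw [pairing_apply_single]
  show proj (fun j : Fin m => pairing n y (0 : Fin n → ℤ))
      - β (fun i => pairing n y (Pi.single i 1)) = - β y
  rw [e1, e2, map_zero, zero_sub]

end Canonical

section Torsion

lemma lin_expand {a : ℕ} (f : (Fin a → ℚ) →ₗ[ℚ] ℚ) (x : Fin a → ℚ) :
    f x = ∑ i, x i • f (Pi.single i 1) := by
  rw [LinearMap.pi_apply_eq_sum_univ]
  refine Finset.sum_congr rfl fun i _ => ?_
  have h : (fun j => if i = j then (1:ℚ) else 0) = Pi.single i 1 := by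
    funext j
    simp [Pi.single_apply, eq_comm]
  rw [h]

/-- clearing denominators of a rational vector -/
lemma clear_denominators {a : ℕ} (v : Fin a → ℚ) :
    ∃ k : ℤ, k ≠ 0 ∧ ∃ w : Fin a → ℤ, ∀ i, (w i : ℚ) = (k : ℚ) * v i := by
  refine ⟨(∏ i, ((v i).den : ℤ)), ?_, ?_⟩
  · refine Finset.prod_ne_zero_iff.mpr fun i _ => ?_
    exact_mod_cast (v i).den_ne_zero
  · have hchoice : ∀ i : Fin a, ∃ z : ℤ, (z : ℚ) = ((∏ j, ((v j).den : ℤ) : ℤ) : ℚ) * v i := by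
      intro i
      obtain ⟨t, ht⟩ := Finset.dvd_prod_of_mem (fun j => ((v j).den : ℤ)) (Finset.mem_univ i)
      refine ⟨t * (v i).num, ?_⟩
      rw [ht]
      push_cast
      rw [mul_comm ((v i).den : ℚ) (t : ℚ), mul_assoc, mul_comm ((v i).den : ℚ) (v i),
        Rat.mul_den_eq_num]
    choose w hw using hchoice
    exact ⟨w, hw⟩

/-- Key lemma: a functional on `ℤ^{r'}` becomes, after scaling by a nonzero integer,
the restriction of a functional on `ℤ^{m'}` along an injection `Q'`. -/
lemma torsion_key {r' m' : ℕ} (Q' : (Fin r' → ℤ) →+ (Fin m' → ℤ))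
    (hQ'inj : Function.Injective ⇑Q') (ψ : (Fin r' → ℤ) →+ ℤ) :
    ∃ k : ℤ, k ≠ 0 ∧ ∃ χ : (Fin m' → ℤ) →+ ℤ, ∀ s, χ (Q' s) = k * ψ s := by
  classical
  set Aq : Matrix (Fin m') (Fin r') ℚ :=
    Matrix.of fun j i => ((Q' (Pi.single i 1) j : ℤ) : ℚ) with hAq
  set fq := Aq.mulVecLin with hfq
  have fq_apply : ∀ (v : Fin r' → ℚ) (j : Fin m'),
      fq v j = ∑ i, ((Q' (Pi.single i 1) j : ℤ) : ℚ) * v i := by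
    intro v j
    simp [hfq, hAq, Matrix.mulVecLin, Matrix.mulVec, dotProduct]
  have cast_comm : ∀ s : Fin r' → ℤ, fq (fun i => (s i : ℚ)) = fun j => ((Q' s j : ℤ) : ℚ) := by
    intro s
    funext j
    rw [fq_apply]
    have h1 : Q' s j = ∑ i, s i * Q' (Pi.single i 1) j := by
      rw [hom_expand Q' s, Finset.sum_apply]
      refine Finset.sum_congr rfl fun i _ => ?_
      rw [Pi.smul_apply, smul_eq_mul]
    rw [h1]
    push_cast
    refine Finset.sum_congr rfl fun i _ => ?_
    ring
  have hfqinj : Function.Injective ⇑fq := by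
    intro v v' hvv
    have hv : fq (v - v') = 0 := by rw [map_sub, hvv, sub_self]
    set u := v - v' with hu
    obtain ⟨k, hk0, w, hw⟩ := clear_denominators u
    have hcast : (fun i => ((w i : ℤ) : ℚ)) = (k : ℚ) • u := by
      funext i
      rw [hw i]
      rfl
    have h2 : fq (fun i => ((w i : ℤ) : ℚ)) = 0 := by
      rw [hcast, map_smul, hv, smul_zero]
    have h3 : Q' w = 0 := by
      funext j
      have := congrFun (cast_comm w) j
      rw [h2] at this
      have h4 : ((Q' w j : ℤ) : ℚ) = 0 := this.symm
      exact_mod_cast h4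
    have h5 : w = 0 := hQ'inj (by rw [h3, map_zero])
    have h6 : u = 0 := by
      funext i
      have := hw i
      rw [h5] at this
      simp only [Pi.zero_apply, Int.cast_zero] at this
      have h7 : (k : ℚ) ≠ 0 := Int.cast_ne_zero.mpr hk0
      field_simp at this
      exact (mul_eq_zero.mp this.symm).resolve_left h7
    have := sub_eq_zero.mp h6
    exact this
  -- dual surjectivity over ℚ
  set ψq : Module.Dual ℚ (Fin r' → ℚ) := ∑ i, ((ψ (Pi.single i 1) : ℤ) : ℚ) • LinearMap.proj i
    with hψq
  have ψq_apply : ∀ v, ψq v = ∑ i, ((ψ (Pi.single i 1) : ℤ) : ℚ) * v i := by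
    intro v
    rw [hψq, LinearMap.sum_apply]
    refine Finset.sum_congr rfl fun i _ => ?_
    rw [LinearMap.smul_apply, LinearMap.proj_apply, smul_eq_mul]
  obtain ⟨ξ, hξ⟩ := LinearMap.dualMap_surjective_iff.mpr hfqinj ψq
  set d : Fin m' → ℚ := fun j => ξ (Pi.single j 1) with hd
  obtain ⟨k, hk0, cvec, hcvec⟩ := clear_denominators d
  refine ⟨k, hk0, pairing m' cvec, ?_⟩
  intro s
  have main : ((pairing m' cvec (Q' s) : ℤ) : ℚ) = ((k * ψ s : ℤ) : ℚ) := by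
    rw [pairing_apply]
    push_cast
    have e1 : ∑ j, (cvec j : ℚ) * ((Q' s j : ℤ) : ℚ)
        = (k : ℚ) * ∑ j, ((Q' s j : ℤ) : ℚ) * d j := by
      rw [Finset.mul_sum]
      refine Finset.sum_congr rfl fun j _ => ?_
      rw [hcvec j]
      ring
    rw [e1]
    have e2 : ∑ j, ((Q' s j : ℤ) : ℚ) * d j = ξ (fun j => ((Q' s j : ℤ) : ℚ)) := by
      rw [lin_expand ξ]
      refine Finset.sum_congr rfl fun j _ => ?_
      rw [smul_eq_mul]
    rw [e2, ← cast_comm s]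
    have e3 : ξ (fq fun i => ((s i : ℤ) : ℚ)) = ψq (fun i => ((s i : ℤ) : ℚ)) := by
      rw [← hξ]
      rfl
    rw [e3, ψq_apply]
    have e4 : ψ s = ∑ i, s i * ψ (Pi.single i 1) := by
      rw [hom_expand ψ s]
      refine Finset.sum_congr rfl fun i _ => ?_
      rw [smul_eq_mul]
    rw [e4]
    push_cast
    congr 1
    refine Finset.sum_congr rfl fun i _ => ?_
    ring
  exact_mod_cast main

end Torsion

theorem stmt_4 (n : ℕ) (N : Type) [AddCommGroup N]
    (r m : ℕ) (Q : (Fin r → ℤ) →+ (Fin m → ℤ)) (proj : (Fin m → ℤ) →+ N)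
    (hQinj : Function.Injective ⇑Q) (hprojsurj : Function.Surjective ⇑proj)
    (hexact : Function.Exact ⇑Q ⇑proj)
    (B : (Fin n → ℤ) →+ (Fin m → ℤ)) (β : (Fin n → ℤ) →+ N)
    (hB : proj.comp B = β)
    (r' m' : ℕ) (Q' : (Fin r' → ℤ) →+ (Fin m' → ℤ))
    (proj' : (Fin m' → ℤ) →+ DGrp B Q)
    (hQ'inj : Function.Injective ⇑Q') (hproj'surj : Function.Surjective ⇑proj')
    (hexact' : Function.Exact ⇑Q' ⇑proj')
    (B' : (Fin n → ℤ) →+ (Fin m' → ℤ))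
    (hB' : proj'.comp B' = (dgDual B Q).comp (pairing n)) :
    (∃ (ν : (Fin n → ℤ) ≃+ (Fin n → ℤ)) (υ : N ≃+ DGrp B' Q'),
        ∀ x, dgDual B' Q' (pairing n (ν x)) = υ (β x)) ↔
      Finite (N ⧸ β.range) := by
  constructor
  · -- forward: the isomorphism forces the cokernel to be finite
    rintro ⟨ν, υ, hc⟩
    haveI : AddGroup.FG (Fin m → ℤ) := Module.Finite.iff_addGroup_fg.mp inferInstance
    haveI : AddGroup.FG N := AddGroup.fg_of_surjective hprojsurj
    haveI : AddGroup.FG (N ⧸ β.range) :=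
      AddGroup.fg_of_surjective (QuotientAddGroup.mk'_surjective β.range)
    refine AddCommGroup.finite_of_fg_torsion _ ?_
    intro q
    induction q using QuotientAddGroup.induction_on with
    | H a =>
      rw [isOfFinAddOrder_iff_zsmul_eq_zero]
      obtain ⟨ψ0, hψ0⟩ := QuotientAddGroup.mk_surjective (υ a)
      obtain ⟨k, hk0, χ, hχ⟩ := torsion_key Q' hQ'inj
        (ψ0.comp (AddMonoidHom.inr (Fin n → ℤ) (Fin r' → ℤ)))
      refine ⟨k, hk0, ?_⟩
      set ρ : ((Fin n → ℤ) × (Fin r' → ℤ)) →+ ℤ := k • ψ0 - χ.comp (B'.coprod Q') with hρ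
      set φ : (Fin n → ℤ) →+ ℤ := ρ.comp (AddMonoidHom.inl (Fin n → ℤ) (Fin r' → ℤ)) with hφ
      have claim1 : k • ψ0 - φ.comp (AddMonoidHom.fst (Fin n → ℤ) (Fin r' → ℤ))
          = compRight (C := ℤ) (B'.coprod Q') χ := by
        refine AddMonoidHom.ext fun p => ?_
        obtain ⟨x, s⟩ := p
        show (k • ψ0) (x, s) - ρ (x, 0) = χ ((B'.coprod Q') (x, s))
        have hρ0 : ρ (0, s) = 0 := by
          show (k • ψ0) (0, s) - χ ((B'.coprod Q') (0, s)) = 0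
          have h1 : (B'.coprod Q') ((0 : Fin n → ℤ), s) = Q' s := by
            rw [AddMonoidHom.coprod_apply, map_zero, zero_add]
          rw [h1, hχ s]
          show k • ψ0 (0, s) - k * ψ0 (0, s) = 0
          rw [smul_eq_mul, sub_self]
        have h2 : ρ (x, s) = ρ (x, 0) + ρ (0, s) := prod_hom_split ρ x s
        have h3 : ρ (x, s) = (k • ψ0) (x, s) - χ ((B'.coprod Q') (x, s)) := rfl
        rw [hρ0, add_zero] at h2
        rw [← h2, h3]
        abel
      -- k • υ a is in the image of the dual map
      obtain ⟨y, hy⟩ := pairing_surjective n φ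
      have step1 : k • υ a = dgDual B' Q' φ := by
        rw [← hψ0]
        have h4 : k • (QuotientAddGroup.mk ψ0 : DGrp B' Q')
            = QuotientAddGroup.mk (k • ψ0) := by
          rfl
        rw [h4]
        show QuotientAddGroup.mk (k • ψ0)
            = QuotientAddGroup.mk (φ.comp (AddMonoidHom.fst (Fin n → ℤ) (Fin r' → ℤ)))
        rw [QuotientAddGroup.eq_iff_sub_mem]
        exact ⟨χ, claim1.symm⟩
      have step2 : dgDual B' Q' φ = υ (β (ν.symm y)) := by
        rw [← hc (ν.symm y)]
        rw [AddEquiv.apply_symm_apply, hy]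
      have step3 : k • a = β (ν.symm y) := by
        apply υ.injective
        rw [map_zsmul, step1, step2]
      have step4 : ((k • a : N) : N ⧸ β.range) = 0 := by
        rw [step3]
        exact (QuotientAddGroup.eq_zero_iff _).mpr ⟨ν.symm y, rfl⟩
      rw [← step4]
      rfl
  · -- backward: finite cokernel gives the double-duality isomorphism
    intro hfin
    have hBpt : ∀ x, proj (B x) = β x := fun x => DFunLike.congr_fun hB x
    set Bc : (Fin n → ℤ) →+ (((Fin n → ℤ) × (Fin r → ℤ)) →+ ℤ) :=
      (compRight (C := ℤ) (AddMonoidHom.fst (Fin n → ℤ) (Fin r → ℤ))).comp (pairing n) with hBcd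
    set Qc : (((Fin m → ℤ)) →+ ℤ) →+ (((Fin n → ℤ) × (Fin r → ℤ)) →+ ℤ) :=
      compRight (C := ℤ) (B.coprod Q) with hQcd
    set projc : (((Fin n → ℤ) × (Fin r → ℤ)) →+ ℤ) →+ DGrp B Q :=
      QuotientAddGroup.mk' (compRight (C := ℤ) (B.coprod Q)).range with hprojcd
    -- injectivity of the canonical `Q`, using finiteness of the cokernel
    have hQcinj : Function.Injective ⇑Qc := by
      rw [injective_iff_map_eq_zero]
      intro χ hχ
      refine AddMonoidHom.ext fun w => ?_
      have hord := isOfFinAddOrder_of_finite ((QuotientAddGroup.mk (proj w) : N ⧸ β.range))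
      obtain ⟨k, hk0, hk⟩ := isOfFinAddOrder_iff_zsmul_eq_zero.mp hord
      have h1 : ((k • proj w : N) : N ⧸ β.range) = 0 := hk
      have h2 : k • proj w ∈ β.range := (QuotientAddGroup.eq_zero_iff _).mp h1
      obtain ⟨x, hx⟩ := h2
      have h3 : proj (k • w - B x) = 0 := by
        rw [map_sub, map_zsmul, hBpt, hx, sub_self]
      obtain ⟨v, hv⟩ := (hexact (k • w - B x)).mp h3
      have h4 : k • w = (B.coprod Q) (x, v) := by
        show k • w = B x + Q v
        rw [hv]
        abel
      have h5 : χ (k • w) = 0 := by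
        rw [h4]
        show (χ.comp (B.coprod Q)) (x, v) = 0
        have : χ.comp (B.coprod Q) = 0 := hχ
        rw [this]
        rfl
      rw [map_zsmul, smul_eq_mul] at h5
      rcases mul_eq_zero.mp h5 with h | h
      · exact absurd h hk0
      · exact h
    have hex₁ : ∀ x, proj' x = 0 ↔ x ∈ Q'.range := by
      intro x
      rw [AddMonoidHom.mem_range]
      exact (hexact' x).trans (by simp [Set.mem_range, eq_comm])
    have hexc : ∀ x, projc x = 0 ↔ x ∈ Qc.range := by
      intro x
      exact QuotientAddGroup.eq_zero_iff x
    have hBB : proj'.comp B' = projc.comp Bc := by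
      rw [hB']
      rfl
    obtain ⟨f, hf⟩ := liftFree projc (QuotientAddGroup.mk'_surjective _) proj'
    obtain ⟨f', hf'⟩ := liftDualProd proj' hproj'surj projc
    obtain ⟨e, he⟩ := comparison Q' proj' B' Qc projc Bc hQ'inj hQcinj hex₁ hexc hBB f hf f' hf'
    obtain ⟨Θ, hΘ⟩ := canonical_equiv Q proj hprojsurj hexact B β hB
    refine ⟨AddEquiv.neg _, Θ.symm.trans e.symm, ?_⟩
    intro x
    have h6 : Θ.symm (β x) = QuotientAddGroup.mk
        ((pairing n (-x)).comp (AddMonoidHom.fst (Fin n → ℤ) ((Fin m → ℤ) →+ ℤ))) := by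
      apply Θ.injective
      rw [AddEquiv.apply_symm_apply, hΘ (-x), map_neg, neg_neg]
    have h7 : e.symm (QuotientAddGroup.mk
        ((pairing n (-x)).comp (AddMonoidHom.fst (Fin n → ℤ) ((Fin m → ℤ) →+ ℤ))))
        = QuotientAddGroup.mk
          ((pairing n (-x)).comp (AddMonoidHom.fst (Fin n → ℤ) (Fin r' → ℤ))) := by
      apply e.injective
      rw [AddEquiv.apply_symm_apply, he (pairing n (-x))]
    show dgDual B' Q' (pairing n (AddEquiv.neg _ x)) = e.symm (Θ.symm (β x))
    rw [h6, h7]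
    rfl
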